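/- Suppose φ : S → ℝ satisfies: there exist an integrable ψ : S → ℝ and real constants C₁, C₂, C₃, C₄ with C₂ = p·C₁ + q'·C₄ and C₃ = p'·C₁ + q·C₄, such that φ(x,1) = C₁ + ∫_x^0 ψ(y,1) dy for x < 0, φ(x,1) = C₂ − ∫_0^x ψ(y,1) dy for x > 0, φ(x,−1) = C₃ − ∫_x^0 ψ(y,−1) dy for x < 0, and φ(x,−1) = C₄ + ∫_0^x ψ(y,−1) dy for x > 0. Then the L¹-norm ‖(1/t)(T(t)φ − φ) − ψ‖_{L¹(S)} tends to 0 as t → 0+. -/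

import Mathlib

set_option maxHeartbeats 1000000

open MeasureTheory Real Filter

open scoped ENNReal Topology

/-- The action of `T(t)` on the upper-line component: `T(t)φ(x,1)`. -/
noncomputable def T1 (p q' t : ℝ) (φ1 φm : ℝ → ℝ) : ℝ → ℝ := fun x =>
  if x < 0 ∨ 0 < x - t then φ1 (x - t) else p * φ1 (x - t) + q' * φm (t - x)

/-- The action of `T(t)` on the lower-line component: `T(t)φ(x,-1)`. -/
noncomputable def Tm (q p' t : ℝ) (φ1 φm : ℝ → ℝ) : ℝ → ℝ := fun x =>
  if 0 < x ∨ x + t < 0 then φm (x + t) else q * φm (x + t) + p' * φ1 (-x - t)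

lemma translate_int (f : ℝ → ℝ) (hf : Integrable f) (s : ℝ) :
    Integrable (fun x => f (x - s)) :=
  ((measurePreserving_sub_right (volume : Measure ℝ) s).integrable_comp hf.1).2 hf

lemma reflect_int (f : ℝ → ℝ) (hf : Integrable f) (c : ℝ) :
    Integrable (fun x => f (c - x)) := by
  have hmp : MeasurePreserving (fun x : ℝ => c - x) volume volume := by
    have := (measurePreserving_add_left (volume : Measure ℝ) c).comp
      (Measure.measurePreserving_neg volume)
    simpa [Function.comp_def, sub_eq_add_neg] using this
  exact (hmp.integrable_comp hf.1).2 hf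

lemma neg_int (f : ℝ → ℝ) (hf : Integrable f) :
    Integrable (fun x => f (-x)) :=
  ((Measure.measurePreserving_neg (volume : Measure ℝ)).integrable_comp hf.1).2 hf

lemma shift_cont (f : ℝ → ℝ) (hf : Integrable f) :
    Continuous (fun s : ℝ => ∫ x, |f (x - s) - f x|) := by
  have hfact : Fact ((1:ℝ≥0∞) ≤ 1) := ⟨le_refl _⟩
  have hmp : ∀ s : ℝ, MeasurePreserving (fun x : ℝ => x - s) volume volume := fun s =>
    measurePreserving_sub_right volume s
  set F : Lp ℝ 1 (volume : Measure ℝ) := hf.toL1 f with hF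
  set g : ℝ → C(ℝ, ℝ) := fun s => ContinuousMap.mk (fun x => x - s)
    (by fun_prop) with hg
  set τ : ℝ → Lp ℝ 1 (volume : Measure ℝ) := fun s =>
    Lp.compMeasurePreserving (g s) (hmp s) F with hτ
  have hgc : Continuous g := by
    apply ContinuousMap.continuous_of_continuous_uncurry
    exact (continuous_snd.sub continuous_fst)
  have hτc : Continuous τ :=
    Continuous.compMeasurePreservingLp continuous_const hgc _ (by norm_num)
  have heq : ∀ s : ℝ, ∫ x, |f (x - s) - f x| = ‖τ s - τ 0‖ := by
    intro s
    have hint : Integrable (fun x => f (x - s)) volume := translate_int f hf s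
    have hae : (fun x => (τ s - τ 0 : Lp ℝ 1 (volume : Measure ℝ)) x) =ᵐ[volume]
        fun x => f (x - s) - f x := by
      filter_upwards [Lp.coeFn_sub (τ s) (τ 0), Lp.coeFn_compMeasurePreserving F (hmp s),
        Lp.coeFn_compMeasurePreserving F (hmp 0),
        (hmp s).quasiMeasurePreserving.ae_eq_comp hf.coeFn_toL1,
        (hmp 0).quasiMeasurePreserving.ae_eq_comp hf.coeFn_toL1] with x h1 h2 h3 h4 h5
      simp only [hτ, hg, ContinuousMap.coe_mk] at h1 h2 h3 ⊢
      rw [h1]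
      simp only [Pi.sub_apply]
      rw [h2, h3]
      have e4 : (↑↑F ∘ fun x => x - s) x = f (x - s) := h4
      have e5 : (↑↑F ∘ fun x => x - 0) x = f (x - 0) := h5
      rw [e4, e5, sub_zero]
    have habs : AEStronglyMeasurable (fun x => f (x - s) - f x) volume :=
      (hint.sub hf).aestronglyMeasurable
    rw [Lp.norm_def, eLpNorm_congr_ae hae, eLpNorm_one_eq_lintegral_enorm,
      ← integral_norm_eq_lintegral_enorm habs]
    simp [Real.norm_eq_abs]
  have : (fun s : ℝ => ∫ x, |f (x - s) - f x|) = fun s => ‖τ s - τ 0‖ := funext heq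
  rw [this]
  exact (hτc.sub continuous_const).norm

lemma ptbound (f : ℝ → ℝ) (hf : Integrable f) {t : ℝ} (ht : 0 < t) (x : ℝ) :
    |(1/t) * (∫ y in (x - t)..x, f y) - f x| ≤ ∫ u in (0:ℝ)..1, |f (x - t * u) - f x| := by
  have hint : Integrable (fun s => f (x - s)) := reflect_int f hf x
  have h2 : Integrable (fun u => f (x - t * u)) := hint.comp_mul_left' ht.ne'
  have e1 : ∫ u in (0:ℝ)..1, f (x - t * u) = (1/t) * ∫ y in (x - t)..x, f y := by
    rw [intervalIntegral.integral_comp_mul_left (fun s => f (x - s)) ht.ne', mul_zero, mul_one,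
      intervalIntegral.integral_comp_sub_left f x, sub_zero, smul_eq_mul, one_div]
  have e2 : (1/t) * (∫ y in (x - t)..x, f y) - f x
      = ∫ u in (0:ℝ)..1, (f (x - t * u) - f x) := by
    rw [intervalIntegral.integral_sub h2.intervalIntegrable intervalIntegrable_const, e1]
    simp
  rw [e2]
  exact intervalIntegral.abs_integral_le_integral_abs zero_le_one

lemma fubini_piece (f : ℝ → ℝ) (hsm : StronglyMeasurable f) (hf : Integrable f) {t : ℝ} :
    Integrable (fun x => ∫ u in (0:ℝ)..1, |f (x - t * u) - f x|) ∧
    (∫ x, ∫ u in (0:ℝ)..1, |f (x - t * u) - f x|)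
      = ∫ u in Set.Ioc (0:ℝ) 1, ∫ x, |f (x - t * u) - f x| := by
  have hmeas : StronglyMeasurable (Function.uncurry fun x u : ℝ => |f (x - t * u) - f x|) := by
    have h1 : Measurable fun z : ℝ × ℝ => z.1 - t * z.2 :=
      measurable_fst.sub (measurable_snd.const_mul t)
    exact continuous_abs.comp_stronglyMeasurable
      ((hsm.comp_measurable h1).sub (hsm.comp_measurable measurable_fst))
  have hunc : Integrable (Function.uncurry fun x u : ℝ => |f (x - t * u) - f x|)
      ((volume : Measure ℝ).prod ((volume : Measure ℝ).restrict (Set.Ioc 0 1))) := by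
    rw [integrable_prod_iff' hmeas.aestronglyMeasurable]
    constructor
    · exact Filter.Eventually.of_forall fun u =>
        ((translate_int f hf (t * u)).sub hf).abs
    · have hGc : Continuous fun u : ℝ => ∫ x, |f (x - t * u) - f x| :=
        (shift_cont f hf).comp (continuous_const.mul continuous_id)
      simpa [Function.uncurry, Real.norm_eq_abs, abs_abs, IntegrableOn] using hGc.integrableOn_Ioc
  have hrw : (fun x => ∫ u in (0:ℝ)..1, |f (x - t * u) - f x|)
      = fun x => ∫ u in Set.Ioc (0:ℝ) 1, |f (x - t * u) - f x| := by
    funext x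
    rw [intervalIntegral.integral_of_le zero_le_one]
  constructor
  · rw [hrw]
    exact hunc.integral_prod_left
  · rw [hrw]
    exact integral_integral_swap hunc

lemma mainTendsto (f : ℝ → ℝ) (hf : Integrable f) :
    Tendsto (fun t : ℝ => ∫ u in Set.Ioc (0:ℝ) 1, ∫ x, |f (x - t * u) - f x|)
      (nhdsWithin 0 (Set.Ioi 0)) (nhds 0) := by
  have hGc : Continuous (fun s : ℝ => ∫ x, |f (x - s) - f x|) := shift_cont f hf
  have hG0 : (∫ x, |f (x - (0:ℝ)) - f x|) = 0 := by simp
  have hGnonneg : ∀ s : ℝ, 0 ≤ ∫ x, |f (x - s) - f x| := fun s =>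
    integral_nonneg fun x => abs_nonneg _
  have hbound : ∀ s : ℝ, (∫ x, |f (x - s) - f x|) ≤ 2 * ∫ x, |f x| := by
    intro s
    have h1 : ∫ x, |f (x - s)| = ∫ x, |f x| := integral_sub_right_eq_self (fun x => |f x|) s
    calc (∫ x, |f (x - s) - f x|) ≤ ∫ x, (|f (x - s)| + |f x|) := by
          apply integral_mono_ae ((translate_int f hf s).sub hf).abs
            ((translate_int f hf s).abs.add hf.abs)
          exact Filter.Eventually.of_forall fun x => abs_sub _ _
      _ = (∫ x, |f (x - s)|) + ∫ x, |f x| :=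
          integral_add (translate_int f hf s).abs hf.abs
      _ = 2 * ∫ x, |f x| := by rw [h1]; ring
  have H : Tendsto (fun t : ℝ => ∫ u in Set.Ioc (0:ℝ) 1, ∫ x, |f (x - t * u) - f x|)
      (nhdsWithin 0 (Set.Ioi 0)) (nhds (∫ _ in Set.Ioc (0:ℝ) 1, (0:ℝ))) := by
    apply tendsto_integral_filter_of_dominated_convergence (fun _ : ℝ => 2 * ∫ x, |f x|)
    · refine Filter.Eventually.of_forall fun t => Continuous.aestronglyMeasurable ?_
      exact hGc.comp (continuous_const.mul continuous_id)
    · exact Filter.Eventually.of_forall fun t => Filter.Eventually.of_forall fun u => by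
        rw [Real.norm_eq_abs, abs_of_nonneg (hGnonneg _)]
        exact hbound _
    · exact integrableOn_const measure_Ioc_lt_top.ne
    · refine Filter.Eventually.of_forall fun u => ?_
      have h2 : Tendsto (fun t : ℝ => t * u) (nhdsWithin 0 (Set.Ioi 0)) (nhds 0) := by
        have := (tendsto_id.mul_const u : Tendsto (fun t : ℝ => t * u) (nhds 0) (nhds (0 * u)))
        rw [zero_mul] at this
        exact this.mono_left nhdsWithin_le_nhds
      have h3 := (hGc.tendsto 0).comp h2
      rw [hG0] at h3
      exact h3
  simpa using H

lemma prim_pos (f : ℝ → ℝ) (hf : Integrable f) :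
    Tendsto (fun t : ℝ => ∫ y in (0:ℝ)..t, |f y|) (nhds 0) (nhds 0) := by
  have hc := intervalIntegral.continuous_primitive
    (fun a b => hf.abs.intervalIntegrable) (0:ℝ)
  have := hc.tendsto 0
  simpa using this

lemma prim_neg (f : ℝ → ℝ) (hf : Integrable f) :
    Tendsto (fun t : ℝ => ∫ y in (-t)..(0:ℝ), |f y|) (nhds 0) (nhds 0) := by
  have hc := intervalIntegral.continuous_primitive
    (fun a b => hf.abs.intervalIntegrable) (0:ℝ)
  have h2 : (fun t : ℝ => ∫ y in (-t)..(0:ℝ), |f y|)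
      = fun t => -((fun b => ∫ y in (0:ℝ)..b, |f y|) (-t)) := by
    funext t
    rw [intervalIntegral.integral_symm]
  rw [h2]
  have := ((hc.comp continuous_neg).neg).tendsto 0
  simpa [Function.comp_def, Pi.neg_def] using this

lemma half (p q' : ℝ) (hp : 0 ≤ p) (hq' : 0 ≤ q') (hp1 : p ≤ 1) (hq'1 : q' ≤ 1)
    (φ1 φm ψ1 ψm : ℝ → ℝ) (hφ1 : Integrable φ1) (hφm : Integrable φm)
    (hψ1 : Integrable ψ1) (hψm : Integrable ψm) (hsm1 : StronglyMeasurable ψ1)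
    (C1 C2 C4 : ℝ) (hC2 : C2 = p * C1 + q' * C4)
    (hφ1n : ∀ x < (0:ℝ), φ1 x = C1 + ∫ y in x..(0:ℝ), ψ1 y)
    (hφ1p : ∀ x > (0:ℝ), φ1 x = C2 - ∫ y in (0:ℝ)..x, ψ1 y)
    (hφmp : ∀ x > (0:ℝ), φm x = C4 + ∫ y in (0:ℝ)..x, ψm y) :
    Tendsto (fun t : ℝ => ∫ x, |(1/t) * (T1 p q' t φ1 φm x - φ1 x) - ψ1 x|)
      (nhdsWithin 0 (Set.Ioi 0)) (nhds 0) := by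
  set U : ℝ → ℝ := fun t => (∫ u in Set.Ioc (0:ℝ) 1, ∫ x, |ψ1 (x - t * u) - ψ1 x|)
      + ((∫ y in (-t)..(0:ℝ), |ψ1 y|) + (∫ y in (0:ℝ)..t, |ψm y|) + (∫ y in (0:ℝ)..t, |ψ1 y|))
      + (∫ y in (0:ℝ)..t, |ψ1 y|) with hU
  have hUt : Tendsto U (nhdsWithin 0 (Set.Ioi 0)) (nhds 0) := by
    have h1 := mainTendsto ψ1 hψ1
    have h2 := (prim_neg ψ1 hψ1).mono_left (nhdsWithin_le_nhds (s := Set.Ioi (0:ℝ)))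
    have h3 := (prim_pos ψm hψm).mono_left (nhdsWithin_le_nhds (s := Set.Ioi (0:ℝ)))
    have h4 := (prim_pos ψ1 hψ1).mono_left (nhdsWithin_le_nhds (s := Set.Ioi (0:ℝ)))
    have := (h1.add ((h2.add h3).add h4)).add h4
    simpa using this
  apply squeeze_zero' ?_ ?_ hUt
  · exact Filter.Eventually.of_forall fun t => integral_nonneg fun x => abs_nonneg _
  · filter_upwards [self_mem_nhdsWithin] with t (ht : (0:ℝ) < t)
    -- notation
    set bd : ℝ := (1/t) * ((∫ y in (-t)..(0:ℝ), |ψ1 y|) + (∫ y in (0:ℝ)..t, |ψm y|)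
        + (∫ y in (0:ℝ)..t, |ψ1 y|)) with hbd_def
    set hmain : ℝ → ℝ := fun x => ∫ u in (0:ℝ)..1, |ψ1 (x - t * u) - ψ1 x| with hmain_def
    set hbd : ℝ → ℝ := Set.indicator (Set.Icc 0 t) (fun x => bd + |ψ1 x|) with hbd2_def
    have J1nn : 0 ≤ ∫ y in (-t)..(0:ℝ), |ψ1 y| :=
      intervalIntegral.integral_nonneg (by linarith) fun y _ => abs_nonneg _
    have J2nn : 0 ≤ ∫ y in (0:ℝ)..t, |ψm y| :=
      intervalIntegral.integral_nonneg ht.le fun y _ => abs_nonneg _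
    have J3nn : 0 ≤ ∫ y in (0:ℝ)..t, |ψ1 y| :=
      intervalIntegral.integral_nonneg ht.le fun y _ => abs_nonneg _
    have bdnn : 0 ≤ bd := by
      apply mul_nonneg (by positivity)
      linarith
    have hmain_nn : ∀ x, 0 ≤ hmain x := fun x =>
      intervalIntegral.integral_nonneg zero_le_one fun u _ => abs_nonneg _
    have hbd_nn : ∀ x, 0 ≤ hbd x := fun x =>
      Set.indicator_nonneg (fun y _ => by positivity) x
    have hfub := fubini_piece ψ1 hsm1 hψ1 (t := t)
    have hmain_int : Integrable hmain := hfub.1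
    have hbd_int : Integrable hbd := by
      apply (IntegrableOn.integrable_indicator · measurableSet_Icc)
      exact (integrableOn_const measure_Icc_lt_top.ne).add hψ1.abs.integrableOn
    -- Integrability of T1
    have hA : Integrable (fun x => φ1 (x - t)) := translate_int φ1 hφ1 t
    have hB : Integrable (fun x => φm (t - x)) := reflect_int φm hφm t
    have hT1 : Integrable (T1 p q' t φ1 φm) := by
      have hpe : T1 p q' t φ1 φm = Set.piecewise {x : ℝ | x < 0 ∨ 0 < x - t}
          (fun x => φ1 (x - t)) (fun x => p * φ1 (x - t) + q' * φm (t - x)) := by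
        funext x
        by_cases h : x < 0 ∨ 0 < x - t
        · simp [T1, Set.piecewise, h]
        · simp [T1, Set.piecewise, h]
      have hset : MeasurableSet {x : ℝ | x < 0 ∨ 0 < x - t} := by
        have : {x : ℝ | x < 0 ∨ 0 < x - t} = Set.Iio 0 ∪ Set.Ioi t := by
          ext x
          simp [sub_pos]
        rw [this]
        exact measurableSet_Iio.union measurableSet_Ioi
      rw [hpe]
      exact Integrable.piecewise hset hA.integrableOn
        (((hA.const_mul p).add (hB.const_mul q')).integrableOn)
    have hLHS_int : Integrable (fun x => |(1/t) * (T1 p q' t φ1 φm x - φ1 x) - ψ1 x|) :=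
      (((hT1.sub hφ1).const_mul (1/t)).sub hψ1).abs
    -- a.e. pointwise bound
    have hae : ∀ᵐ x : ℝ, |(1/t) * (T1 p q' t φ1 φm x - φ1 x) - ψ1 x| ≤ hmain x + hbd x := by
      have h0 : ∀ᵐ x : ℝ, x ≠ 0 := by
        simpa using measure_eq_zero_iff_ae_notMem.mp (measure_singleton (0:ℝ))
      have htt : ∀ᵐ x : ℝ, x ≠ t := by
        simpa using measure_eq_zero_iff_ae_notMem.mp (measure_singleton t)
      filter_upwards [h0, htt] with x hx0 hxt
      rcases lt_trichotomy x 0 with hx | hx | hx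
      · -- x < 0
        have hT : T1 p q' t φ1 φm x = φ1 (x - t) := by
          simp only [T1]
          rw [if_pos (Or.inl hx)]
        have hadj : (∫ y in (x - t)..x, ψ1 y) + (∫ y in x..(0:ℝ), ψ1 y)
            = ∫ y in (x - t)..(0:ℝ), ψ1 y :=
          intervalIntegral.integral_add_adjacent_intervals hψ1.intervalIntegrable
            hψ1.intervalIntegrable
        have hdiff : T1 p q' t φ1 φm x - φ1 x = ∫ y in (x - t)..x, ψ1 y := by
          rw [hT, hφ1n x hx, hφ1n (x - t) (by linarith), ← hadj]
          ring
        rw [hdiff]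
        have := ptbound ψ1 hψ1 ht x
        have h2 := hbd_nn x
        calc |(1/t) * (∫ y in (x - t)..x, ψ1 y) - ψ1 x| ≤ hmain x := this
          _ ≤ hmain x + hbd x := by linarith
      · exact absurd hx hx0
      · rcases lt_trichotomy x t with hx2 | hx2 | hx2
        · -- 0 < x < t : boundary region
          have hT : T1 p q' t φ1 φm x = p * φ1 (x - t) + q' * φm (t - x) := by
            simp only [T1]
            have hcond : ¬(x < 0 ∨ 0 < x - t) := by
              push_neg
              exact ⟨hx.le, by linarith⟩
            rw [if_neg hcond]
          have hbdx : hbd x = bd + |ψ1 x| := by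
            rw [hbd2_def]
            exact Set.indicator_of_mem (Set.mem_Icc.mpr ⟨hx.le, hx2.le⟩) _
          set I1 : ℝ := ∫ y in (x - t)..(0:ℝ), ψ1 y with hI1
          set I2 : ℝ := ∫ y in (0:ℝ)..(t - x), ψm y with hI2
          set I3 : ℝ := ∫ y in (0:ℝ)..x, ψ1 y with hI3
          have hdiff : T1 p q' t φ1 φm x - φ1 x = p * I1 + q' * I2 + I3 := by
            rw [hT, hφ1n (x - t) (by linarith), hφmp (t - x) (by linarith), hφ1p x hx, hC2]
            ring
          have e1 : |I1| ≤ ∫ y in (-t)..(0:ℝ), |ψ1 y| := by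
            have h1 : |I1| ≤ ∫ y in (x - t)..(0:ℝ), |ψ1 y| :=
              intervalIntegral.abs_integral_le_integral_abs (by linarith)
            have hadd : (∫ y in (-t)..(x - t), |ψ1 y|) + (∫ y in (x - t)..(0:ℝ), |ψ1 y|)
                = ∫ y in (-t)..(0:ℝ), |ψ1 y| :=
              intervalIntegral.integral_add_adjacent_intervals hψ1.abs.intervalIntegrable
                hψ1.abs.intervalIntegrable
            have hnn : 0 ≤ ∫ y in (-t)..(x - t), |ψ1 y| :=
              intervalIntegral.integral_nonneg (by linarith) fun y _ => abs_nonneg _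
            linarith
          have e2 : |I2| ≤ ∫ y in (0:ℝ)..t, |ψm y| := by
            have h1 : |I2| ≤ ∫ y in (0:ℝ)..(t - x), |ψm y| :=
              intervalIntegral.abs_integral_le_integral_abs (by linarith)
            have hadd : (∫ y in (0:ℝ)..(t - x), |ψm y|) + (∫ y in (t - x)..t, |ψm y|)
                = ∫ y in (0:ℝ)..t, |ψm y| :=
              intervalIntegral.integral_add_adjacent_intervals hψm.abs.intervalIntegrable
                hψm.abs.intervalIntegrable
            have hnn : 0 ≤ ∫ y in (t - x)..t, |ψm y| :=
              intervalIntegral.integral_nonneg (by linarith) fun y _ => abs_nonneg _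
            linarith
          have e3 : |I3| ≤ ∫ y in (0:ℝ)..t, |ψ1 y| := by
            have h1 : |I3| ≤ ∫ y in (0:ℝ)..x, |ψ1 y| :=
              intervalIntegral.abs_integral_le_integral_abs (by linarith)
            have hadd : (∫ y in (0:ℝ)..x, |ψ1 y|) + (∫ y in x..t, |ψ1 y|)
                = ∫ y in (0:ℝ)..t, |ψ1 y| :=
              intervalIntegral.integral_add_adjacent_intervals hψ1.abs.intervalIntegrable
                hψ1.abs.intervalIntegrable
            have hnn : 0 ≤ ∫ y in x..t, |ψ1 y| :=
              intervalIntegral.integral_nonneg (by linarith) fun y _ => abs_nonneg _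
            linarith
          have hsum : |p * I1 + q' * I2 + I3| ≤ (∫ y in (-t)..(0:ℝ), |ψ1 y|)
              + (∫ y in (0:ℝ)..t, |ψm y|) + (∫ y in (0:ℝ)..t, |ψ1 y|) := by
            have t1 : |p * I1 + q' * I2 + I3| ≤ p * |I1| + q' * |I2| + |I3| := by
              calc |p * I1 + q' * I2 + I3| ≤ |p * I1 + q' * I2| + |I3| := abs_add_le _ _
                _ ≤ |p * I1| + |q' * I2| + |I3| := by
                    have := abs_add_le (p * I1) (q' * I2)
                    linarith
                _ = p * |I1| + q' * |I2| + |I3| := by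
                    rw [abs_mul, abs_mul, abs_of_nonneg hp, abs_of_nonneg hq']
            have t2 : p * |I1| ≤ ∫ y in (-t)..(0:ℝ), |ψ1 y| := by
              calc p * |I1| ≤ 1 * |I1| := by
                    apply mul_le_mul_of_nonneg_right hp1 (abs_nonneg _)
                _ = |I1| := one_mul _
                _ ≤ _ := e1
            have t3 : q' * |I2| ≤ ∫ y in (0:ℝ)..t, |ψm y| := by
              calc q' * |I2| ≤ 1 * |I2| := by
                    apply mul_le_mul_of_nonneg_right hq'1 (abs_nonneg _)
                _ = |I2| := one_mul _
                _ ≤ _ := e2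
            linarith
          rw [hdiff, hbdx]
          have hstep : |(1/t) * (p * I1 + q' * I2 + I3) - ψ1 x|
              ≤ (1/t) * ((∫ y in (-t)..(0:ℝ), |ψ1 y|) + (∫ y in (0:ℝ)..t, |ψm y|)
                + (∫ y in (0:ℝ)..t, |ψ1 y|)) + |ψ1 x| := by
            calc |(1/t) * (p * I1 + q' * I2 + I3) - ψ1 x|
                ≤ |(1/t) * (p * I1 + q' * I2 + I3)| + |ψ1 x| := abs_sub _ _
              _ = (1/t) * |p * I1 + q' * I2 + I3| + |ψ1 x| := by
                  rw [abs_mul, abs_of_pos (by positivity : (0:ℝ) < 1/t)]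
              _ ≤ (1/t) * ((∫ y in (-t)..(0:ℝ), |ψ1 y|) + (∫ y in (0:ℝ)..t, |ψm y|)
                  + (∫ y in (0:ℝ)..t, |ψ1 y|)) + |ψ1 x| := by
                  have := mul_le_mul_of_nonneg_left hsum (by positivity : (0:ℝ) ≤ 1/t)
                  linarith
          have := hmain_nn x
          calc |(1/t) * (p * I1 + q' * I2 + I3) - ψ1 x| ≤ bd + |ψ1 x| := hstep
            _ ≤ hmain x + (bd + |ψ1 x|) := by linarith
        · exact absurd hx2 hxt
        · -- x > t
          have hT : T1 p q' t φ1 φm x = φ1 (x - t) := by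
            simp only [T1]
            rw [if_pos (Or.inr (sub_pos.mpr hx2))]
          have hadj : (∫ y in (0:ℝ)..(x - t), ψ1 y) + (∫ y in (x - t)..x, ψ1 y)
              = ∫ y in (0:ℝ)..x, ψ1 y :=
            intervalIntegral.integral_add_adjacent_intervals hψ1.intervalIntegrable
              hψ1.intervalIntegrable
          have hdiff : T1 p q' t φ1 φm x - φ1 x = ∫ y in (x - t)..x, ψ1 y := by
            rw [hT, hφ1p x hx, hφ1p (x - t) (by linarith), ← hadj]
            ring
          rw [hdiff]
          have := ptbound ψ1 hψ1 ht x
          have h2 := hbd_nn x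
          calc |(1/t) * (∫ y in (x - t)..x, ψ1 y) - ψ1 x| ≤ hmain x := this
            _ ≤ hmain x + hbd x := by linarith
    -- put the integral bound together
    have hbd_eval : ∫ x, hbd x = bd * t + ∫ y in (0:ℝ)..t, |ψ1 y| := by
      rw [hbd2_def, integral_indicator measurableSet_Icc,
        integral_add (integrableOn_const (C := bd) measure_Icc_lt_top.ne) hψ1.abs.integrableOn,
        setIntegral_const, Real.volume_real_Icc_of_le ht.le, smul_eq_mul]
      rw [integral_Icc_eq_integral_Ioc, ← intervalIntegral.integral_of_le ht.le]
      ring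
    have hmain_eval : ∫ x, hmain x = ∫ u in Set.Ioc (0:ℝ) 1, ∫ x, |ψ1 (x - t * u) - ψ1 x| :=
      hfub.2
    have hbdt : bd * t = (∫ y in (-t)..(0:ℝ), |ψ1 y|) + (∫ y in (0:ℝ)..t, |ψm y|)
        + (∫ y in (0:ℝ)..t, |ψ1 y|) := by
      rw [hbd_def]
      field_simp
    calc ∫ x, |(1/t) * (T1 p q' t φ1 φm x - φ1 x) - ψ1 x|
        ≤ ∫ x, (hmain x + hbd x) := integral_mono_ae hLHS_int (hmain_int.add hbd_int) hae
      _ = (∫ x, hmain x) + ∫ x, hbd x := integral_add hmain_int hbd_int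
      _ = U t := by
          rw [hmain_eval, hbd_eval, hbdt]
          simp only [hU]
          ring

theorem stmt3 (p p' q q' : ℝ) (hp : 0 ≤ p) (hp' : 0 ≤ p') (hq : 0 ≤ q) (hq' : 0 ≤ q')
    (hpp : p + p' ≤ 1) (hqq : q + q' ≤ 1)
    (φ1 φm ψ1 ψm : ℝ → ℝ) (hφ1 : Integrable φ1) (hφm : Integrable φm)
    (hψ1 : Integrable ψ1) (hψm : Integrable ψm)
    (C1 C2 C3 C4 : ℝ) (hC2 : C2 = p * C1 + q' * C4) (hC3 : C3 = p' * C1 + q * C4)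
    (hφ1n : ∀ x < (0:ℝ), φ1 x = C1 + ∫ y in x..(0:ℝ), ψ1 y)
    (hφ1p : ∀ x > (0:ℝ), φ1 x = C2 - ∫ y in (0:ℝ)..x, ψ1 y)
    (hφmn : ∀ x < (0:ℝ), φm x = C3 - ∫ y in x..(0:ℝ), ψm y)
    (hφmp : ∀ x > (0:ℝ), φm x = C4 + ∫ y in (0:ℝ)..x, ψm y) :
    Tendsto (fun t : ℝ =>
        (∫ x, |(1/t) * (T1 p q' t φ1 φm x - φ1 x) - ψ1 x|)
          + ∫ x, |(1/t) * (Tm q p' t φ1 φm x - φm x) - ψm x|)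
      (nhdsWithin 0 (Set.Ioi 0)) (nhds 0) := by
  have hp1 : p ≤ 1 := by linarith
  have hp'1 : p' ≤ 1 := by linarith
  have hq1 : q ≤ 1 := by linarith
  have hq'1 : q' ≤ 1 := by linarith
  -- measurable representatives
  set ψ1' : ℝ → ℝ := (hψ1.1).mk ψ1 with hψ1'def
  set ψm' : ℝ → ℝ := (hψm.1).mk ψm with hψm'def
  have hae1 : ψ1 =ᵐ[volume] ψ1' := (hψ1.1).ae_eq_mk
  have haem : ψm =ᵐ[volume] ψm' := (hψm.1).ae_eq_mk
  have hsm1 : StronglyMeasurable ψ1' := (hψ1.1).stronglyMeasurable_mk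
  have hsmm : StronglyMeasurable ψm' := (hψm.1).stronglyMeasurable_mk
  have hψ1i : Integrable ψ1' := hψ1.congr hae1
  have hψmi : Integrable ψm' := hψm.congr haem
  have hint1 : ∀ a b : ℝ, (∫ y in a..b, ψ1 y) = ∫ y in a..b, ψ1' y := fun a b =>
    intervalIntegral.integral_congr_ae (by filter_upwards [hae1] with y hy _; exact hy)
  have hintm : ∀ a b : ℝ, (∫ y in a..b, ψm y) = ∫ y in a..b, ψm' y := fun a b =>
    intervalIntegral.integral_congr_ae (by filter_upwards [haem] with y hy _; exact hy)
  have hφ1n' : ∀ x < (0:ℝ), φ1 x = C1 + ∫ y in x..(0:ℝ), ψ1' y := fun x hx => by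
    rw [hφ1n x hx, hint1]
  have hφ1p' : ∀ x > (0:ℝ), φ1 x = C2 - ∫ y in (0:ℝ)..x, ψ1' y := fun x hx => by
    rw [hφ1p x hx, hint1]
  have hφmn' : ∀ x < (0:ℝ), φm x = C3 - ∫ y in x..(0:ℝ), ψm' y := fun x hx => by
    rw [hφmn x hx, hintm]
  have hφmp' : ∀ x > (0:ℝ), φm x = C4 + ∫ y in (0:ℝ)..x, ψm' y := fun x hx => by
    rw [hφmp x hx, hintm]
  have H1 := half p q' hp hq' hp1 hq'1 φ1 φm ψ1' ψm' hφ1 hφm hψ1i hψmi hsm1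
    C1 C2 C4 hC2 hφ1n' hφ1p' hφmp'
  -- the reflected half
  have hφmneg : Integrable (fun y => φm (-y)) := neg_int φm hφm
  have hφ1neg : Integrable (fun y => φ1 (-y)) := neg_int φ1 hφ1
  have hψmneg : Integrable (fun y => ψm' (-y)) := neg_int ψm' hψmi
  have hψ1neg : Integrable (fun y => ψ1' (-y)) := neg_int ψ1' hψ1i
  have hsmmneg : StronglyMeasurable (fun y => ψm' (-y)) :=
    hsmm.comp_measurable measurable_neg
  have hC3' : C3 = q * C4 + p' * C1 := by rw [hC3]; ring
  have e1 : ∀ x < (0:ℝ), φm (-x) = C4 + ∫ y in x..(0:ℝ), ψm' (-y) := by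
    intro x hx
    rw [hφmp' (-x) (by linarith), intervalIntegral.integral_comp_neg fun y => ψm' y, neg_zero]
  have e2 : ∀ x > (0:ℝ), φm (-x) = C3 - ∫ y in (0:ℝ)..x, ψm' (-y) := by
    intro x hx
    rw [hφmn' (-x) (by linarith), intervalIntegral.integral_comp_neg fun y => ψm' y, neg_zero]
  have e3 : ∀ x > (0:ℝ), φ1 (-x) = C1 + ∫ y in (0:ℝ)..x, ψ1' (-y) := by
    intro x hx
    rw [hφ1n' (-x) (by linarith), intervalIntegral.integral_comp_neg fun y => ψ1' y, neg_zero]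
  have H2' := half q p' hq hp' hq1 hp'1 (fun y => φm (-y)) (fun y => φ1 (-y))
    (fun y => ψm' (-y)) (fun y => ψ1' (-y)) hφmneg hφ1neg hψmneg hψ1neg hsmmneg
    C4 C3 C1 hC3' e1 e2 e3
  have hrel : ∀ t x : ℝ, T1 q p' t (fun y => φm (-y)) (fun y => φ1 (-y)) (-x)
      = Tm q p' t φ1 φm x := by
    intro t x
    simp only [T1, Tm]
    have hiff : (-x < 0 ∨ 0 < -x - t) ↔ (0 < x ∨ x + t < 0) := by
      constructor
      · rintro (h | h)
        · left; linarith
        · right; linarith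
      · rintro (h | h)
        · left; linarith
        · right; linarith
    rw [show (-(-x - t)) = x + t by ring, show (-(t - -x)) = -x - t by ring]
    exact if_congr hiff rfl rfl
  have H2 : Tendsto (fun t : ℝ => ∫ x, |(1/t) * (Tm q p' t φ1 φm x - φm x) - ψm' x|)
      (nhdsWithin 0 (Set.Ioi 0)) (nhds 0) := by
    apply H2'.congr
    intro t
    calc ∫ x, |(1/t) * (T1 q p' t (fun y => φm (-y)) (fun y => φ1 (-y)) x - φm (-x)) - ψm' (-x)|
        = ∫ x, (fun y => |(1/t) * (Tm q p' t φ1 φm y - φm y) - ψm' y|) (-x) := by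
          refine integral_congr_ae (Filter.Eventually.of_forall fun x => ?_)
          simp only
          rw [← hrel t (-x), neg_neg]
      _ = ∫ x, |(1/t) * (Tm q p' t φ1 φm x - φm x) - ψm' x| :=
          integral_neg_eq_self (fun y => |1 / t * (Tm q p' t φ1 φm y - φm y) - ψm' y|) volume
  have Hsum : Tendsto (fun t : ℝ =>
      (∫ x, |(1/t) * (T1 p q' t φ1 φm x - φ1 x) - ψ1' x|)
        + ∫ x, |(1/t) * (Tm q p' t φ1 φm x - φm x) - ψm' x|)
      (nhdsWithin 0 (Set.Ioi 0)) (nhds 0) := by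
    simpa using H1.add H2
  apply Hsum.congr
  intro t
  congr 1
  · exact integral_congr_ae (by filter_upwards [hae1] with x hx; rw [hx])
  · exact integral_congr_ae (by filter_upwards [haem] with x hx; rw [hx])
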